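/- If μ₀ has the fixed-point property ∫ V·(f ∘ r) dμ₀ = ∫ f dμ₀ for all f ∈ L^∞(X, μ₀), then for each f ∈ L¹(X, μ₀) there exists a function R_{μ₀}(V f) ∈ L¹(X, μ₀) such that ∫ V·f·(g ∘ r) dμ₀ = ∫ R_{μ₀}(V f)·g dμ₀ for all g ∈ L^∞(X, μ₀). -/

import Mathlib

open MeasureTheory
open scoped NNReal ENNReal

lemma aux_stmt1 {X : Type*} [MeasurableSpace X] (r : X → X) (hr : Measurable r)
    (V : X → ℝ) (hVm : Measurable V) (hVpos : ∀ x, 0 ≤ V x) (hVbdd : ∃ C, ∀ x, V x ≤ C)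
    (μ₀ : Measure X) [IsFiniteMeasure μ₀]
    (hfp : ∀ f : X → ℝ, Measurable f → (∃ C, ∀ x, |f x| ≤ C) →
      ∫ x, V x * f (r x) ∂μ₀ = ∫ x, f x ∂μ₀)
    (φ : X → ℝ) (hφm : Measurable φ) (hφ0 : ∀ x, 0 ≤ φ x)
    (hint : Integrable (fun x => V x * φ x) μ₀) :
    ∃ ρ : X → ℝ, Integrable ρ μ₀ ∧
      ∀ g : X → ℝ, Measurable g →
        ∫ x, (V x * φ x) * g (r x) ∂μ₀ = ∫ x, ρ x * g x ∂μ₀ := by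
  set d : X → ℝ≥0 := fun x => (V x * φ x).toNNReal with hd
  have hdm : Measurable d := (hVm.mul hφm).real_toNNReal
  set ω : Measure X := μ₀.withDensity (fun x => (d x : ℝ≥0∞)) with hω
  haveI hωfin : IsFiniteMeasure ω := by
    refine isFiniteMeasure_withDensity ?_
    have := hint.lintegral_lt_top
    simpa [d, ENNReal.ofReal] using this.ne
  set ν : Measure X := ω.map r with hν
  haveI hνfin : IsFiniteMeasure ν := by
    exact Measure.isFiniteMeasure_map ω r
  have hac : ν ≪ μ₀ := by
    refine Measure.AbsolutelyContinuous.mk (fun E hE hμE => ?_)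
    -- fixed point property applied to the indicator of E
    have h1 : ∫ x, V x * (E.indicator (fun _ => (1:ℝ)) (r x)) ∂μ₀
        = ∫ x, E.indicator (fun _ => (1:ℝ)) x ∂μ₀ := by
      refine hfp _ (measurable_one.indicator hE) ⟨1, fun x => ?_⟩
      by_cases hx : x ∈ E <;> simp [Set.indicator, hx]
    have h2 : ∫ x, E.indicator (fun _ => (1:ℝ)) x ∂μ₀ = 0 := by
      rw [integral_indicator hE]
      simp [Measure.restrict_eq_zero.mpr hμE]
    have hintV : Integrable (fun x => V x * (E.indicator (fun _ => (1:ℝ)) (r x))) μ₀ := by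
      obtain ⟨C, hC⟩ := hVbdd
      refine ⟨((hVm.mul ((measurable_one.indicator hE).comp hr)).aestronglyMeasurable),
        HasFiniteIntegral.of_bounded (C := C) ?_⟩
      filter_upwards with x
      by_cases hx : r x ∈ E <;>
        simp [Set.indicator, hx, abs_of_nonneg (hVpos x), hC x, (hVpos x).trans (hC x)]
    have hnonneg : (0:X → ℝ) ≤ fun x => V x * (E.indicator (fun _ => (1:ℝ)) (r x)) := by
      intro x
      by_cases hx : r x ∈ E <;> simp [Set.indicator, hx, hVpos x]
    have hV0 : (fun x => V x * (E.indicator (fun _ => (1:ℝ)) (r x))) =ᵐ[μ₀] 0 := by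
      rw [← integral_eq_zero_iff_of_nonneg hnonneg hintV, h1, h2]
    -- deduce that the density vanishes a.e. on r ⁻¹' E
    have hdE : (r ⁻¹' E).indicator (fun x => (d x : ℝ≥0∞)) =ᵐ[μ₀] 0 := by
      filter_upwards [hV0] with x hx
      by_cases hxE : x ∈ r ⁻¹' E
      · have hVx : V x = 0 := by
          have h' := hx
          simp only [Set.indicator, Set.mem_preimage.mp hxE, if_true, Pi.zero_apply,
            mul_one] at h'
          exact h'
        simp [Set.indicator, hxE, d, hVx]
      · simp [Set.indicator, hxE]
    rw [hν, Measure.map_apply hr hE, hω, withDensity_apply _ (hr hE),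
      ← lintegral_indicator (hr hE), lintegral_congr_ae hdE]
    simp
  refine ⟨fun x => (ν.rnDeriv μ₀ x).toReal, Measure.integrable_toReal_rnDeriv, fun g hg => ?_⟩
  have key : ∫ x, (ν.rnDeriv μ₀ x).toReal • g x ∂μ₀ = ∫ x, g x ∂ν :=
    integral_rnDeriv_smul hac
  have h3 : ∫ x, g x ∂ν = ∫ x, g (r x) ∂ω := by
    rw [hν, integral_map hr.aemeasurable hg.aestronglyMeasurable]
  have h4 : ∫ x, g (r x) ∂ω = ∫ x, d x • g (r x) ∂μ₀ :=
    integral_withDensity_eq_integral_smul hdm _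
  have h5 : ∀ x, d x • g (r x) = (V x * φ x) * g (r x) := by
    intro x
    simp [hd, NNReal.smul_def, smul_eq_mul, Real.coe_toNNReal _ (mul_nonneg (hVpos x) (hφ0 x))]
  calc ∫ x, (V x * φ x) * g (r x) ∂μ₀ = ∫ x, d x • g (r x) ∂μ₀ := by
        exact integral_congr_ae (Filter.Eventually.of_forall fun x => (h5 x).symm)
    _ = ∫ x, g x ∂ν := by rw [h3, h4]
    _ = ∫ x, (ν.rnDeriv μ₀ x).toReal * g x ∂μ₀ := by
        rw [← key]; simp [smul_eq_mul]

/-- If μ₀ has the fixed-point property, then for each f ∈ L¹(X,μ₀) there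
exists R_{μ₀}(V f) ∈ L¹(X,μ₀) with ∫ V·f·(g∘r) dμ₀ = ∫ R_{μ₀}(V f)·g dμ₀ for all
g ∈ L^∞(X,μ₀). -/
theorem stmt1 {X : Type*} [MeasurableSpace X] (r : X → X) (hr : Measurable r)
    (hsurj : Function.Surjective r) (hfin : ∀ x, (r ⁻¹' {x}).Finite)
    (V : X → ℝ) (hVm : Measurable V) (hVpos : ∀ x, 0 ≤ V x) (hVbdd : ∃ C, ∀ x, V x ≤ C)
    (μ₀ : Measure X) [IsFiniteMeasure μ₀]
    (hfp : ∀ f : X → ℝ, Measurable f → (∃ C, ∀ x, |f x| ≤ C) →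
      ∫ x, V x * f (r x) ∂μ₀ = ∫ x, f x ∂μ₀) :
    ∀ f : X → ℝ, Integrable f μ₀ →
      ∃ ρ : X → ℝ, Integrable ρ μ₀ ∧
        ∀ g : X → ℝ, Measurable g → (∃ C, ∀ x, |g x| ≤ C) →
          ∫ x, V x * f x * g (r x) ∂μ₀ = ∫ x, ρ x * g x ∂μ₀ := by
  intro f hf
  -- replace f by a measurable representative
  set f' : X → ℝ := hf.1.mk f with hf'def
  have hf'm : Measurable f' := hf.1.stronglyMeasurable_mk.measurable
  have hff' : f =ᵐ[μ₀] f' := hf.1.ae_eq_mk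
  have hf'int : Integrable f' μ₀ := hf.congr hff'
  set φp : X → ℝ := fun x => max (f' x) 0 with hφp
  set φn : X → ℝ := fun x => max (-f' x) 0 with hφn
  have hφpm : Measurable φp := hf'm.max measurable_const
  have hφnm : Measurable φn := hf'm.neg.max measurable_const
  have hφp0 : ∀ x, 0 ≤ φp x := fun x => le_max_right _ _
  have hφn0 : ∀ x, 0 ≤ φn x := fun x => le_max_right _ _
  have hφpint : Integrable φp μ₀ := hf'int.pos_part
  have hφnint : Integrable φn μ₀ := hf'int.neg.pos_part
  obtain ⟨C, hC⟩ := hVbdd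
  have hVnorm : ∃ C, ∀ x, ‖V x‖ ≤ C := ⟨C, fun x => by
    rw [Real.norm_eq_abs, abs_of_nonneg (hVpos x)]; exact hC x⟩
  have hVp : Integrable (fun x => V x * φp x) μ₀ :=
    hφpint.bdd_mul hVm.aestronglyMeasurable (Filter.Eventually.of_forall hVnorm.choose_spec)
  have hVn : Integrable (fun x => V x * φn x) μ₀ :=
    hφnint.bdd_mul hVm.aestronglyMeasurable (Filter.Eventually.of_forall hVnorm.choose_spec)
  obtain ⟨ρp, hρpint, hρp⟩ := aux_stmt1 r hr V hVm hVpos ⟨C, hC⟩ μ₀ hfp φp hφpm hφp0 hVp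
  obtain ⟨ρn, hρnint, hρn⟩ := aux_stmt1 r hr V hVm hVpos ⟨C, hC⟩ μ₀ hfp φn hφnm hφn0 hVn
  refine ⟨fun x => ρp x - ρn x, hρpint.sub hρnint, fun g hg hgbdd => ?_⟩
  obtain ⟨D, hD⟩ := hgbdd
  have hgnorm : ∃ D, ∀ x, ‖g (r x)‖ ≤ D := ⟨D, fun x => by rw [Real.norm_eq_abs]; exact hD _⟩
  have hgnorm' : ∃ D, ∀ x, ‖g x‖ ≤ D := ⟨D, fun x => by rw [Real.norm_eq_abs]; exact hD _⟩
  have hgrm : AEStronglyMeasurable (fun x => g (r x)) μ₀ := (hg.comp hr).aestronglyMeasurable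
  have hIp : Integrable (fun x => (V x * φp x) * g (r x)) μ₀ := by
    simpa [mul_comm] using hVp.bdd_mul hgrm (Filter.Eventually.of_forall hgnorm.choose_spec)
  have hIn : Integrable (fun x => (V x * φn x) * g (r x)) μ₀ := by
    simpa [mul_comm] using hVn.bdd_mul hgrm (Filter.Eventually.of_forall hgnorm.choose_spec)
  have hJp : Integrable (fun x => ρp x * g x) μ₀ := by
    simpa [mul_comm] using hρpint.bdd_mul hg.aestronglyMeasurable (Filter.Eventually.of_forall hgnorm'.choose_spec)
  have hJn : Integrable (fun x => ρn x * g x) μ₀ := by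
    simpa [mul_comm] using hρnint.bdd_mul hg.aestronglyMeasurable (Filter.Eventually.of_forall hgnorm'.choose_spec)
  have hsplit : ∀ x, V x * f' x * g (r x)
      = (V x * φp x) * g (r x) - (V x * φn x) * g (r x) := by
    intro x
    have : f' x = φp x - φn x := (max_zero_sub_max_neg_zero_eq_self (f' x)).symm
    rw [this]; ring
  calc ∫ x, V x * f x * g (r x) ∂μ₀ = ∫ x, V x * f' x * g (r x) ∂μ₀ := by
        refine integral_congr_ae ?_
        filter_upwards [hff'] with x hx
        rw [hx]
    _ = ∫ x, ((V x * φp x) * g (r x) - (V x * φn x) * g (r x)) ∂μ₀ :=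
        integral_congr_ae (Filter.Eventually.of_forall fun x => by simpa using hsplit x)
    _ = ∫ x, (V x * φp x) * g (r x) ∂μ₀ - ∫ x, (V x * φn x) * g (r x) ∂μ₀ :=
        integral_sub hIp hIn
    _ = ∫ x, ρp x * g x ∂μ₀ - ∫ x, ρn x * g x ∂μ₀ := by rw [hρp g hg, hρn g hg]
    _ = ∫ x, (ρp x * g x - ρn x * g x) ∂μ₀ := (integral_sub hJp hJn).symm
    _ = ∫ x, (ρp x - ρn x) * g x ∂μ₀ :=
        integral_congr_ae (Filter.Eventually.of_forall fun x => by ring)
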